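/- Theorem 1 (property 2): Let k be the equal opportunity control. For every game (X, λ_w, p, G, v_q, v_u, ω), the set of k-controlled equilibria equals the set of non-discriminatory equilibria. -/

import Mathlib

/-!
Formalization of the Coate–Loury statistical discrimination model with
machine-learning (contractible) beliefs, following Zhu,
"The Impact of Equal Opportunity on Statistical Discrimination".
-/

open scoped BigOperators
open MeasureTheory

noncomputable section

attribute [local instance] Classical.propDecidable

/-- Group identities `I = {w, b}`. -/
inductive GrpI
  | w
  | b
deriving DecidableEq

instance : Fintype GrpI := ⟨{GrpI.w, GrpI.b}, fun x => by cases x <;> simp⟩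

/-- Classes `Y = {q, u}` (qualified / unqualified). -/
inductive Cls
  | q
  | u
deriving DecidableEq

instance : Fintype Cls := ⟨{Cls.q, Cls.u}, fun x => by cases x <;> simp⟩

/-- A game `(X, λ_w, p, G, v_q, v_u, ω)` of the Coate–Loury model.  The set of
other features is the finite product `X = X_1 × ⋯ × X_N`, encoded as the pi type
`(j : Fin N) → Xs j`.  The statistical model (Assumption 1) is encoded through a
nonempty subset `Ysub ⊆ {1, …, N}` together with the factorization
`p(x | i, y) = pY(x_𝒴 | y) · pC(x_{-𝒴} | i, x_𝒴)`.  The cost distribution is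
given by an everywhere positive density `g` with `∫ g = 1` and `∫ |c| g(c) dc < ∞`. -/
structure Game (N : ℕ) (Xs : Fin N → Type) [∀ j, Fintype (Xs j)]
    [∀ j, Nonempty (Xs j)] where
  lamw : ℝ
  lamw_pos : 0 < lamw
  lamw_lt_one : lamw < 1
  Ysub : Finset (Fin N)
  Ysub_nonempty : Ysub.Nonempty
  pY : ((j : Ysub) → Xs j.1) → Cls → ℝ
  pC : GrpI → ((j : Fin N) → Xs j) → ℝ
  pY_pos : ∀ xY y, 0 < pY xY y
  pC_pos : ∀ i x, 0 < pC i x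
  pY_sum : ∀ y, ∑ xY, pY xY y = 1
  pC_sum : ∀ (i : GrpI) (xY : (j : Ysub) → Xs j.1),
    ∑ x ∈ Finset.univ.filter
        (fun x : (j : Fin N) → Xs j => (fun j : Ysub => x j.1) = xY),
      pC i x = 1
  g : ℝ → ℝ
  g_pos : ∀ c, 0 < g c
  g_int : Integrable g
  g_norm : (∫ c, g c) = 1
  g_abs_int : Integrable fun c => |c| * g c
  vq : ℝ
  vu : ℝ
  om : ℝ
  vq_pos : 0 < vq
  vu_pos : 0 < vu
  om_pos : 0 < om

section Policies

variable {N : ℕ} {Xs : Fin N → Type}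

/-- A decision policy `d : I × X → [0,1]`. -/
def IsPolicy (d : GrpI → ((j : Fin N) → Xs j) → ℝ) : Prop :=
  ∀ i x, d i x ∈ Set.Icc (0 : ℝ) 1

/-- A decision policy when data is color-blind, `d_cb : X → [0,1]`. -/
def IsCbPolicy (dcb : ((j : Fin N) → Xs j) → ℝ) : Prop :=
  ∀ x, dcb x ∈ Set.Icc (0 : ℝ) 1

/-- `S ⊆ {1, …, N}` has the dependence property for the belief `f`:
`f` depends on `(i, x)` only up to `(i, x_S)`. -/
def DepProp {I : Type} (f : I → ((j : Fin N) → Xs j) → ℝ)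
    (S : Finset (Fin N)) : Prop :=
  ∀ (i : I) (x x' : (j : Fin N) → Xs j), (∀ j ∈ S, x j = x' j) → f i x = f i x'

/-- The minimal subset `Ŷ(f)` with the dependence property. -/
def minDep {I : Type} (f : I → ((j : Fin N) → Xs j) → ℝ) : Finset (Fin N) :=
  Finset.univ.filter fun j => ∀ S : Finset (Fin N), DepProp f S → j ∈ S

variable [∀ j, Fintype (Xs j)]

/-- Full-support probability distributions on `I × X` (the set `Δ°(I × X)`). -/
def FullSupp (μ : GrpI → ((j : Fin N) → Xs j) → ℝ) : Prop :=
  (∀ i x, 0 < μ i x) ∧ ∑ i, ∑ x, μ i x = 1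

/-- Beliefs valued in `(0, 1)`. -/
def OpenBelief (f : GrpI → ((j : Fin N) → Xs j) → ℝ) : Prop :=
  ∀ i x, f i x ∈ Set.Ioo (0 : ℝ) 1

/-- Acceptance rate of group `i`. -/
def AR (i : GrpI) (d μ : GrpI → ((j : Fin N) → Xs j) → ℝ) : ℝ :=
  (∑ x, d i x * μ i x) / ∑ x, μ i x

/-- True positive rate of group `i`. -/
def TP (i : GrpI) (d μ f : GrpI → ((j : Fin N) → Xs j) → ℝ) : ℝ :=
  (∑ x, d i x * μ i x * f i x) / ∑ x, μ i x * f i x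

/-- The equal opportunity control `k(X, μ, f)`. -/
def EOset (μ f : GrpI → ((j : Fin N) → Xs j) → ℝ) :
    Set (GrpI → ((j : Fin N) → Xs j) → ℝ) :=
  {d | IsPolicy d ∧ TP GrpI.w d μ f = TP GrpI.b d μ f}

/-- The color-blind control: all color-blind decision policies. -/
def CBset : Set (GrpI → ((j : Fin N) → Xs j) → ℝ) :=
  {d | IsPolicy d ∧ ∀ x, d GrpI.w x = d GrpI.b x}

/-- The no proxies control: policies depending on `(i,x)` only through `x_{Ŷ(f)}`. -/
def NoProxies (_μ f : GrpI → ((j : Fin N) → Xs j) → ℝ) :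
    Set (GrpI → ((j : Fin N) → Xs j) → ℝ) :=
  {d | IsPolicy d ∧
    ∀ i i' x x', (∀ j ∈ minDep f, x j = x' j) → d i x = d i' x'}

/-- `ℓ²` distance between decision policies. -/
def polDist (d d' : GrpI → ((j : Fin N) → Xs j) → ℝ) : ℝ :=
  Real.sqrt (∑ i, ∑ x, (d i x - d' i x) ^ 2)

/-- `ℓ²` distance between pairs `(μ, f)`. -/
def pairDist (μ f μ' f' : GrpI → ((j : Fin N) → Xs j) → ℝ) : ℝ :=
  Real.sqrt ((∑ i, ∑ x, (μ i x - μ' i x) ^ 2) + ∑ i, ∑ x, (f i x - f' i x) ^ 2)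

/-- `ℓ²` distance between strategy profiles `(c̄, d)`. -/
def profDist (c : GrpI → ℝ) (d : GrpI → ((j : Fin N) → Xs j) → ℝ)
    (c' : GrpI → ℝ) (d' : GrpI → ((j : Fin N) → Xs j) → ℝ) : ℝ :=
  Real.sqrt ((∑ i, (c i - c' i) ^ 2) + ∑ i, ∑ x, (d i x - d' i x) ^ 2)

end Policies

/-- Upper hemicontinuity of a correspondence on a set. -/
def UpperHemicontinuousOnCorr {α β : Type*} [TopologicalSpace α] [TopologicalSpace β]
    (F : α → Set β) (S : Set α) : Prop :=
  ∀ a ∈ S, ∀ V : Set β, IsOpen V → F a ⊆ V → ∀ᶠ a' in nhdsWithin a S, F a' ⊆ V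

/-- Lower hemicontinuity of a correspondence on a set. -/
def LowerHemicontinuousOnCorr {α β : Type*} [TopologicalSpace α] [TopologicalSpace β]
    (F : α → Set β) (S : Set α) : Prop :=
  ∀ a ∈ S, ∀ V : Set β, IsOpen V → (F a ∩ V).Nonempty →
    ∀ᶠ a' in nhdsWithin a S, (F a' ∩ V).Nonempty

namespace Game

variable {N : ℕ} {Xs : Fin N → Type} [∀ j, Fintype (Xs j)] [∀ j, Nonempty (Xs j)]
variable (Γ : Game N Xs)

/-- Projection `x ↦ x_𝒴`. -/
def proj (x : (j : Fin N) → Xs j) : (j : Γ.Ysub) → Xs j.1 := fun j => x j.1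

/-- `p(x | i, y) = p(x_𝒴 | y) · p(x_{-𝒴} | i, x_𝒴)`. -/
def p (i : GrpI) (x : (j : Fin N) → Xs j) (y : Cls) : ℝ :=
  Γ.pY (Γ.proj x) y * Γ.pC i x

/-- Group probabilities `λ_w`, `λ_b = 1 - λ_w`. -/
def lam : GrpI → ℝ := fun i =>
  match i with
  | GrpI.w => Γ.lamw
  | GrpI.b => 1 - Γ.lamw

/-- The CDF `G` of the cost distribution. -/
def G (c : ℝ) : ℝ := ∫ t in Set.Iic c, Γ.g t

/-- The likelihood function `l(x) = p(x_𝒴 | q) / p(x_𝒴 | u)`. -/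
def lhd (x : (j : Fin N) → Xs j) : ℝ :=
  Γ.pY (Γ.proj x) Cls.q / Γ.pY (Γ.proj x) Cls.u

/-- The likelihood function on `X_𝒴`. -/
def lhdY (xY : (j : Γ.Ysub) → Xs j.1) : ℝ := Γ.pY xY Cls.q / Γ.pY xY Cls.u

/-- The set of likelihood values `{l_1 < … < l_n}`. -/
def LVset : Set ℝ := Set.range Γ.lhd

/-- The assumption that `1` is not a likelihood value
(equivalently, `WW` is single-peaked). -/
def OneNotLV : Prop := (1 : ℝ) ∉ Γ.LVset

/-- The largest likelihood value `l_n`. -/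
def lmax : ℝ := sSup Γ.LVset

/-- `⌈ℓ⌉`: the smallest likelihood value `≥ ℓ`. -/
def lceil (ℓ : ℝ) : ℝ := sInf {v | v ∈ Γ.LVset ∧ ℓ ≤ v}

/-- `⌈ℓ⌉⁻`: the next smallest likelihood value below `⌈ℓ⌉` (or `l_0 = 0`). -/
def lceilm (ℓ : ℝ) : ℝ := sSup (insert 0 {v | v ∈ Γ.LVset ∧ v < Γ.lceil ℓ})

/-- The smallest likelihood value `> ℓ`. -/
def lnext (ℓ : ℝ) : ℝ := sInf {v | v ∈ Γ.LVset ∧ ℓ < v}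

/-- The true distribution of features `μ_RE` given cost thresholds `c̄`. -/
def muRE (c : GrpI → ℝ) (i : GrpI) (x : (j : Fin N) → Xs j) : ℝ :=
  Γ.lam i * (Γ.G (c i) * Γ.p i x Cls.q + (1 - Γ.G (c i)) * Γ.p i x Cls.u)

/-- The true conditional probability (calibrated belief) `f_RE` given `c̄`. -/
def fRE (c : GrpI → ℝ) (i : GrpI) (x : (j : Fin N) → Xs j) : ℝ :=
  Γ.G (c i) * Γ.p i x Cls.q /
    (Γ.G (c i) * Γ.p i x Cls.q + (1 - Γ.G (c i)) * Γ.p i x Cls.u)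

/-- Utility `U_i(c̄(i), d(i))` of the representative `i`-applicant. -/
def Uapp (i : GrpI) (ci : ℝ) (di : ((j : Fin N) → Xs j) → ℝ) : ℝ :=
  Γ.om * ∑ x, (Γ.G ci * Γ.p i x Cls.q + (1 - Γ.G ci) * Γ.p i x Cls.u) * di x -
    ∫ t in Set.Iic ci, t * Γ.g t

/-- Firm utility `U_F(d, μ, f)`. -/
def UF (d μ f : GrpI → ((j : Fin N) → Xs j) → ℝ) : ℝ :=
  ∑ i, ∑ x, d i x * μ i x * (f i x * Γ.vq - (1 - f i x) * Γ.vu)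

/-- The color-blind true distribution of features `μ_cb,RE`. -/
def mucbRE (c : GrpI → ℝ) (x : (j : Fin N) → Xs j) : ℝ :=
  Γ.muRE c GrpI.w x + Γ.muRE c GrpI.b x

/-- The color-blind true conditional probability `f_cb,RE`. -/
def fcbRE (c : GrpI → ℝ) (x : (j : Fin N) → Xs j) : ℝ :=
  (Γ.muRE c GrpI.w x * Γ.fRE c GrpI.w x + Γ.muRE c GrpI.b x * Γ.fRE c GrpI.b x) /
    Γ.mucbRE c x

/-- Firm utility when data is color-blind. -/
def UFcb (dcb μcb fcb : ((j : Fin N) → Xs j) → ℝ) : ℝ :=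
  ∑ x, dcb x * μcb x * (fcb x * Γ.vq - (1 - fcb x) * Γ.vu)

/-- `d(i | l_m)`: conditional acceptance probability at likelihood value `lv`. -/
def dcond (i : GrpI) (di : ((j : Fin N) → Xs j) → ℝ) (lv : ℝ) : ℝ :=
  (∑ x ∈ Finset.univ.filter (fun x => Γ.lhd x = lv), Γ.p i x Cls.q * di x) /
    ∑ x ∈ Finset.univ.filter (fun x => Γ.lhd x = lv), Γ.p i x Cls.q

/-- The within-group policy `d(i)` is associated with the likelihood mixture `ℓ`. -/
def AssociatedWith (i : GrpI) (di : ((j : Fin N) → Xs j) → ℝ) (ℓ : ℝ) : Prop :=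
  0 ≤ ℓ ∧ ℓ ≤ Γ.lmax ∧
    ∀ lv ∈ Γ.LVset,
      (Γ.lceil ℓ < lv → Γ.dcond i di lv = 1) ∧
      (lv = Γ.lceil ℓ →
        Γ.dcond i di lv = (Γ.lceil ℓ - ℓ) / (Γ.lceil ℓ - Γ.lceilm ℓ)) ∧
      (lv < Γ.lceil ℓ → Γ.dcond i di lv = 0)

/-- A decision policy is fair if both within-group policies are associated with
the same likelihood mixture. -/
def Fair (d : GrpI → ((j : Fin N) → Xs j) → ℝ) : Prop :=
  ∃ ℓ, Γ.AssociatedWith GrpI.w (d GrpI.w) ℓ ∧ Γ.AssociatedWith GrpI.b (d GrpI.b) ℓ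

/-- `WW(l_m) = ω ∑_{x_𝒴 : l(x_𝒴) > l_m} (p(x_𝒴|q) - p(x_𝒴|u))`. -/
def WWval (t : ℝ) : ℝ :=
  Γ.om * ∑ xY ∈ Finset.univ.filter (fun xY => t < Γ.lhdY xY),
    (Γ.pY xY Cls.q - Γ.pY xY Cls.u)

/-- The piecewise-linear function `WW` interpolating the points `(l_m, WW(l_m))`. -/
def WW (ℓ : ℝ) : ℝ :=
  if Γ.lceil ℓ = Γ.lceilm ℓ then Γ.WWval (Γ.lceil ℓ)
  else
    (Γ.WWval (Γ.lceilm ℓ) * (Γ.lceil ℓ - ℓ) +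
        Γ.WWval (Γ.lceil ℓ) * (ℓ - Γ.lceilm ℓ)) /
      (Γ.lceil ℓ - Γ.lceilm ℓ)

/-- `EĒ(l_m)`: the unique cost with `G(EĒ(l_m)) = 1 / ((v_q/v_u) l_m + 1)`. -/
def EEbar (lv : ℝ) : ℝ := sInf {cc | 1 / (Γ.vq / Γ.vu * lv + 1) ≤ Γ.G cc}

/-- The correspondence `EE : [0, l_n] ⇒ ℝ`. -/
def EE (ℓ : ℝ) : Set ℝ :=
  if ℓ = 0 then Set.Ici (Γ.EEbar (Γ.lceil 0))
  else if ℓ = Γ.lmax then Set.Iic (Γ.EEbar Γ.lmax)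
  else if ℓ ∈ Γ.LVset then Set.Icc (Γ.EEbar (Γ.lnext ℓ)) (Γ.EEbar ℓ)
  else {Γ.EEbar (Γ.lceil ℓ)}

/-- Each representative applicant's cost threshold is a best response to `d`. -/
def BestResponds (c : GrpI → ℝ) (d : GrpI → ((j : Fin N) → Xs j) → ℝ) : Prop :=
  ∀ (i : GrpI) (c' : ℝ), Γ.Uapp i c' (d i) ≤ Γ.Uapp i (c i) (d i)

/-- An (un-controlled) equilibrium. -/
def IsEquilibrium (c : GrpI → ℝ) (d : GrpI → ((j : Fin N) → Xs j) → ℝ) : Prop :=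
  IsPolicy d ∧ Γ.BestResponds c d ∧
    ∀ d', IsPolicy d' →
      Γ.UF d' (Γ.muRE c) (Γ.fRE c) ≤ Γ.UF d (Γ.muRE c) (Γ.fRE c)

/-- A `k`-controlled equilibrium, for the control `(μ, f) ↦ K μ f`. -/
def IsControlledEq
    (K : (GrpI → ((j : Fin N) → Xs j) → ℝ) → (GrpI → ((j : Fin N) → Xs j) → ℝ) →
      Set (GrpI → ((j : Fin N) → Xs j) → ℝ))
    (c : GrpI → ℝ) (d : GrpI → ((j : Fin N) → Xs j) → ℝ) : Prop :=
  d ∈ K (Γ.muRE c) (Γ.fRE c) ∧ Γ.BestResponds c d ∧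
    ∀ d' ∈ K (Γ.muRE c) (Γ.fRE c),
      Γ.UF d' (Γ.muRE c) (Γ.fRE c) ≤ Γ.UF d (Γ.muRE c) (Γ.fRE c)

/-- `𝒮_k(μ, f)`: firm-optimal policies under the control `K` at `(μ, f)`. -/
def Smax
    (K : (GrpI → ((j : Fin N) → Xs j) → ℝ) → (GrpI → ((j : Fin N) → Xs j) → ℝ) →
      Set (GrpI → ((j : Fin N) → Xs j) → ℝ))
    (μ f : GrpI → ((j : Fin N) → Xs j) → ℝ) :
    Set (GrpI → ((j : Fin N) → Xs j) → ℝ) :=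
  {d | d ∈ K μ f ∧ ∀ d' ∈ K μ f, Γ.UF d' μ f ≤ Γ.UF d μ f}

/-- A `k`-controlled `ε`-equilibrium. -/
def IsCtrlEpsEq
    (K : (GrpI → ((j : Fin N) → Xs j) → ℝ) → (GrpI → ((j : Fin N) → Xs j) → ℝ) →
      Set (GrpI → ((j : Fin N) → Xs j) → ℝ))
    (ε : ℝ) (c : GrpI → ℝ) (d : GrpI → ((j : Fin N) → Xs j) → ℝ) : Prop :=
  ∃ μ f, FullSupp μ ∧ OpenBelief f ∧
    pairDist μ f (Γ.muRE c) (Γ.fRE c) ≤ ε ∧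
    Γ.BestResponds c d ∧ d ∈ K μ f ∧ ∀ d' ∈ K μ f, Γ.UF d' μ f ≤ Γ.UF d μ f

/-- Best responses of applicants to a color-blind policy. -/
def BestRespondsCb (c : GrpI → ℝ) (dcb : ((j : Fin N) → Xs j) → ℝ) : Prop :=
  ∀ (i : GrpI) (c' : ℝ), Γ.Uapp i c' dcb ≤ Γ.Uapp i (c i) dcb

/-- An equilibrium when data is color-blind (unrestricted control). -/
def IsCbEquilibrium (c : GrpI → ℝ) (dcb : ((j : Fin N) → Xs j) → ℝ) : Prop :=
  IsCbPolicy dcb ∧ Γ.BestRespondsCb c dcb ∧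
    ∀ dcb', IsCbPolicy dcb' →
      Γ.UFcb dcb' (Γ.mucbRE c) (Γ.fcbRE c) ≤ Γ.UFcb dcb (Γ.mucbRE c) (Γ.fcbRE c)

/-- A `k_cb`-controlled equilibrium when data is color-blind. -/
def IsCbControlledEq (K : Set (((j : Fin N) → Xs j) → ℝ)) (c : GrpI → ℝ)
    (dcb : ((j : Fin N) → Xs j) → ℝ) : Prop :=
  dcb ∈ K ∧ Γ.BestRespondsCb c dcb ∧
    ∀ dcb' ∈ K,
      Γ.UFcb dcb' (Γ.mucbRE c) (Γ.fcbRE c) ≤ Γ.UFcb dcb (Γ.mucbRE c) (Γ.fcbRE c)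

end Game

/-- A control when data is color-blind: for each `X` and each
`(μ_cb, f_cb) ∈ Δ°(X) × (0,1)^X` it specifies a nonempty compact set of
color-blind decision policies. -/
structure CbControl : Type 1 where
  sets : ∀ (N : ℕ) (Xs : Fin N → Type) [∀ j, Fintype (Xs j)] [∀ j, Nonempty (Xs j)],
    (((j : Fin N) → Xs j) → ℝ) → (((j : Fin N) → Xs j) → ℝ) →
      Set (((j : Fin N) → Xs j) → ℝ)
  nonempty : ∀ (N : ℕ) (Xs : Fin N → Type) [∀ j, Fintype (Xs j)]
    [∀ j, Nonempty (Xs j)] (μ f : ((j : Fin N) → Xs j) → ℝ),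
    (∀ x, 0 < μ x) → (∑ x, μ x = 1) → (∀ x, f x ∈ Set.Ioo (0 : ℝ) 1) →
    (sets N Xs μ f).Nonempty
  compact : ∀ (N : ℕ) (Xs : Fin N → Type) [∀ j, Fintype (Xs j)]
    [∀ j, Nonempty (Xs j)] (μ f : ((j : Fin N) → Xs j) → ℝ),
    (∀ x, 0 < μ x) → (∑ x, μ x = 1) → (∀ x, f x ∈ Set.Ioo (0 : ℝ) 1) →
    IsCompact (sets N Xs μ f)
  mem_policy : ∀ (N : ℕ) (Xs : Fin N → Type) [∀ j, Fintype (Xs j)]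
    [∀ j, Nonempty (Xs j)] (μ f : ((j : Fin N) → Xs j) → ℝ),
    (∀ x, 0 < μ x) → (∑ x, μ x = 1) → (∀ x, f x ∈ Set.Ioo (0 : ℝ) 1) →
    sets N Xs μ f ⊆ {dcb | IsCbPolicy dcb}

namespace EOproof

open GrpI Cls Set

variable {N : ℕ} {Xs : Fin N → Type} [∀ j, Fintype (Xs j)] [∀ j, Nonempty (Xs j)]
variable (Γ : Game N Xs)

lemma p_pos (i : GrpI) (x : (j : Fin N) → Xs j) (y : Cls) : 0 < Γ.p i x y :=
  mul_pos (Γ.pY_pos _ _) (Γ.pC_pos _ _)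

lemma lhd_pos (x : (j : Fin N) → Xs j) : 0 < Γ.lhd x :=
  div_pos (Γ.pY_pos _ _) (Γ.pY_pos _ _)

lemma q_eq (i : GrpI) (x : (j : Fin N) → Xs j) :
    Γ.p i x Cls.q = Γ.lhd x * Γ.p i x Cls.u := by
  unfold Game.p Game.lhd
  have h := (Γ.pY_pos (Γ.proj x) Cls.u).ne'
  field_simp

/-- Fiberwise summation: conditional probabilities `pC` integrate out. -/
lemma sum_fiber (i : GrpI) (F : ((j : Γ.Ysub) → Xs j.1) → ℝ) :
    ∑ x, F (Γ.proj x) * Γ.pC i x = ∑ xY, F xY := by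
  classical
  rw [← Finset.sum_fiberwise_of_maps_to (t := Finset.univ) (g := Γ.proj)
    (fun x _ => Finset.mem_univ _) (fun x => F (Γ.proj x) * Γ.pC i x)]
  refine Finset.sum_congr rfl fun xY _ => ?_
  have h1 : ∑ x ∈ Finset.univ.filter (fun x => Γ.proj x = xY),
      F (Γ.proj x) * Γ.pC i x
      = ∑ x ∈ Finset.univ.filter (fun x => Γ.proj x = xY), F xY * Γ.pC i x := by
    refine Finset.sum_congr rfl fun x hx => ?_
    rw [(Finset.mem_filter.1 hx).2]
  rw [h1, ← Finset.mul_sum]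
  have h2 := Γ.pC_sum i xY
  have h3 : (Finset.univ.filter (fun x => Γ.proj x = xY))
      = (Finset.univ.filter
        (fun x : (j : Fin N) → Xs j => (fun j : Γ.Ysub => x j.1) = xY)) := rfl
  rw [h3, h2, mul_one]

lemma sum_p (i : GrpI) (y : Cls) : ∑ x, Γ.p i x y = 1 := by
  have := sum_fiber Γ i (fun xY => Γ.pY xY y)
  simpa [Game.p, Γ.pY_sum y] using this

/-- Group independence of likelihood statistics. -/
lemma sum_phi (i : GrpI) (φ : ℝ → ℝ) :
    ∑ x, φ (Γ.lhd x) * Γ.p i x Cls.q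
      = ∑ xY, φ (Γ.lhdY xY) * Γ.pY xY Cls.q := by
  have := sum_fiber Γ i (fun xY => φ (Γ.lhdY xY) * Γ.pY xY Cls.q)
  rw [← this]
  refine Finset.sum_congr rfl fun x _ => ?_
  simp [Game.p, Game.lhd, Game.lhdY, mul_assoc]

end EOproof
namespace EOproof2
open MeasureTheory Set
variable {N : ℕ} {Xs : Fin N → Type} [∀ j, Fintype (Xs j)] [∀ j, Nonempty (Xs j)]

lemma Iic_split {a b : ℝ} (hab : a ≤ b) (f : ℝ → ℝ) (hf : Integrable f) :
    ∫ t in Set.Iic b, f t = (∫ t in Set.Iic a, f t) + ∫ t in Set.Ioc a b, f t := by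
  rw [← setIntegral_union (Set.Iic_disjoint_Ioc le_rfl) measurableSet_Ioc
    hf.integrableOn hf.integrableOn, Set.Iic_union_Ioc_eq_Iic hab]

variable (Γ : Game N Xs)

lemma g_supp : Function.support Γ.g = Set.univ :=
  Set.eq_univ_iff_forall.2 fun c => (Γ.g_pos c).ne'

lemma G_pos (c0 : ℝ) : 0 < Γ.G c0 := by
  rw [Game.G]
  rw [setIntegral_pos_iff_support_of_nonneg_ae
    (ae_of_all _ fun t => (Γ.g_pos t).le) Γ.g_int.integrableOn]
  rw [g_supp, Set.univ_inter]
  simp [Real.volume_Iic]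

lemma G_lt_one (c0 : ℝ) : Γ.G c0 < 1 := by
  have h := integral_add_compl (measurableSet_Iic (a := c0)) Γ.g_int
  rw [Set.compl_Iic, Γ.g_norm] at h
  have hpos : 0 < ∫ t in Set.Ioi c0, Γ.g t := by
    rw [setIntegral_pos_iff_support_of_nonneg_ae
      (ae_of_all _ fun t => (Γ.g_pos t).le) Γ.g_int.integrableOn]
    rw [g_supp, Set.univ_inter]
    simp [Real.volume_Ioi]
  have h2 : Γ.G c0 = ∫ t in Set.Iic c0, Γ.g t := rfl
  linarith

lemma tg_int : Integrable (fun t => t * Γ.g t) := by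
  refine Γ.g_abs_int.mono ?_ (ae_of_all _ fun t => ?_)
  · exact aestronglyMeasurable_id.mul Γ.g_int.aestronglyMeasurable
  · simp [abs_mul, abs_of_pos (Γ.g_pos t), abs_abs, le_refl]

lemma Bg_int (B : ℝ) : Integrable (fun t => (B - t) * Γ.g t) := by
  have : (fun t => (B - t) * Γ.g t) = fun t => B * Γ.g t - t * Γ.g t := by
    funext t; ring
  rw [this]
  exact (Γ.g_int.const_mul B).sub (tg_int Γ)

lemma phi_repr (B c0 : ℝ) :
    ∫ t in Set.Iic c0, (B - t) * Γ.g t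
      = B * Γ.G c0 - ∫ t in Set.Iic c0, t * Γ.g t := by
  have h1 : ∫ t in Set.Iic c0, (B - t) * Γ.g t
      = (∫ t in Set.Iic c0, B * Γ.g t) - ∫ t in Set.Iic c0, t * Γ.g t := by
    rw [← integral_sub (Γ.g_int.const_mul B).integrableOn (tg_int Γ).integrableOn]
    congr 1; funext t; ring
  rw [h1, MeasureTheory.integral_const_mul]; rfl

lemma int_pos_of_lt {a b B : ℝ} (hab : a < b) (hB : B ≤ a) :
    0 < ∫ t in Set.Ioc a b, (t - B) * Γ.g t := by
  have hint : IntegrableOn (fun t => (t - B) * Γ.g t) (Set.Ioc a b) := by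
    have h : (fun t => (t - B) * Γ.g t) = fun t => -((B - t) * Γ.g t) := by
      funext t; ring
    rw [h]; exact (Bg_int Γ B).neg.integrableOn
  rw [setIntegral_pos_iff_support_of_nonneg_ae ?_ hint]
  · have hsub : Set.Ioc a b ⊆
        (Function.support fun t => (t - B) * Γ.g t) ∩ Set.Ioc a b := by
      intro t ht
      refine ⟨?_, ht⟩
      have : B < t := lt_of_le_of_lt hB ht.1
      exact mul_ne_zero (by linarith) (Γ.g_pos t).ne'
    refine lt_of_lt_of_le ?_ (measure_mono hsub)
    rw [Real.volume_Ioc]; simp [hab]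
  · rw [Filter.EventuallyLE, ae_restrict_iff' measurableSet_Ioc]
    exact ae_of_all _ fun t ht => mul_nonneg (by linarith [ht.1, hB]) (Γ.g_pos t).le

lemma int_neg_of_lt {a b B : ℝ} (hab : a < b) (hB : b ≤ B) :
    0 < ∫ t in Set.Ioc a b, (B - t) * Γ.g t := by
  have hint : IntegrableOn (fun t => (B - t) * Γ.g t) (Set.Ioc a b) :=
    (Bg_int Γ B).integrableOn
  rw [setIntegral_pos_iff_support_of_nonneg_ae ?_ hint]
  · have hsub : Set.Ioo a b ⊆
        (Function.support fun t => (B - t) * Γ.g t) ∩ Set.Ioc a b := by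
      intro t ht
      refine ⟨?_, Set.Ioo_subset_Ioc_self ht⟩
      have : t < B := lt_of_lt_of_le ht.2 hB
      exact mul_ne_zero (by linarith) (Γ.g_pos t).ne'
    refine lt_of_lt_of_le ?_ (measure_mono hsub)
    rw [Real.volume_Ioo]; simp [hab]
  · rw [Filter.EventuallyLE, ae_restrict_iff' measurableSet_Ioc]
    exact ae_of_all _ fun t ht => mul_nonneg (by linarith [ht.2, hB]) (Γ.g_pos t).le

/-- The map `c₀ ↦ B·G(c₀) − ∫_{≤c₀} t g(t) dt` has strict global maximum at `B`. -/
lemma strict_max (B c0 : ℝ) (hne : c0 ≠ B) :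
    B * Γ.G c0 - (∫ t in Set.Iic c0, t * Γ.g t)
      < B * Γ.G B - ∫ t in Set.Iic B, t * Γ.g t := by
  rw [← phi_repr, ← phi_repr]
  rcases lt_or_gt_of_ne hne with h | h
  · rw [Iic_split h.le _ (Bg_int Γ B)]
    have := int_neg_of_lt Γ h le_rfl
    linarith
  · rw [Iic_split (b := c0) h.le _ (Bg_int Γ B)]
    have h2 := int_pos_of_lt Γ h le_rfl
    have h3 : ∫ t in Set.Ioc B c0, (B - t) * Γ.g t
        = -∫ t in Set.Ioc B c0, (t - B) * Γ.g t := by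
      rw [← integral_neg]; congr 1; funext t; ring
    linarith

end EOproof2
namespace EOproof
open EOproof2 Set
variable {N : ℕ} {Xs : Fin N → Type} [∀ j, Fintype (Xs j)] [∀ j, Nonempty (Xs j)]
variable (Γ : Game N Xs)

lemma lam_pos (i : GrpI) : 0 < Γ.lam i := by
  cases i
  · exact Γ.lamw_pos
  · simpa [Game.lam] using sub_pos.2 Γ.lamw_lt_one

lemma u_eq (i : GrpI) (x : (j : Fin N) → Xs j) :
    Γ.p i x Cls.u = Γ.p i x Cls.q / Γ.lhd x := by
  rw [eq_div_iff (lhd_pos Γ x).ne', q_eq Γ i x]; ring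

lemma uapp_repr (i : GrpI) (ci : ℝ) (di : ((j : Fin N) → Xs j) → ℝ) :
    Γ.Uapp i ci di
      = (Γ.om * ∑ x, (Γ.p i x Cls.q - Γ.p i x Cls.u) * di x) * Γ.G ci
        - (∫ t in Set.Iic ci, t * Γ.g t) + Γ.om * ∑ x, Γ.p i x Cls.u * di x := by
  rw [Game.Uapp]
  have h : ∀ x : (j : Fin N) → Xs j,
      (Γ.G ci * Γ.p i x Cls.q + (1 - Γ.G ci) * Γ.p i x Cls.u) * di x
      = Γ.G ci * ((Γ.p i x Cls.q - Γ.p i x Cls.u) * di x)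
        + Γ.p i x Cls.u * di x := fun x => by ring
  rw [Finset.sum_congr rfl fun x _ => h x, Finset.sum_add_distrib, ← Finset.mul_sum]
  ring

lemma bestResponds_eq {c : GrpI → ℝ} {d : GrpI → ((j : Fin N) → Xs j) → ℝ}
    (hbr : Γ.BestResponds c d) (i : GrpI) :
    c i = Γ.om * ∑ x, (Γ.p i x Cls.q - Γ.p i x Cls.u) * d i x := by
  by_contra hne
  set B := Γ.om * ∑ x, (Γ.p i x Cls.q - Γ.p i x Cls.u) * d i x with hB
  have h1 := hbr i B
  rw [uapp_repr, uapp_repr] at h1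
  have h2 := strict_max Γ B (c i) hne
  rw [← hB] at h1
  linarith

lemma muf (c : GrpI → ℝ) (i : GrpI) (x : (j : Fin N) → Xs j) :
    Γ.muRE c i x * Γ.fRE c i x = Γ.lam i * (Γ.G (c i) * Γ.p i x Cls.q) := by
  have hden : 0 < Γ.G (c i) * Γ.p i x Cls.q + (1 - Γ.G (c i)) * Γ.p i x Cls.u := by
    have := G_pos Γ (c i); have := G_lt_one Γ (c i)
    have := p_pos Γ i x Cls.q; have := p_pos Γ i x Cls.u
    nlinarith
  rw [Game.muRE, Game.fRE]
  field_simp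

lemma mu_one_sub_f (c : GrpI → ℝ) (i : GrpI) (x : (j : Fin N) → Xs j) :
    Γ.muRE c i x * (1 - Γ.fRE c i x)
      = Γ.lam i * ((1 - Γ.G (c i)) * Γ.p i x Cls.u) := by
  have h := muf Γ c i x
  rw [mul_sub, mul_one, h, Game.muRE]
  ring

lemma tp_eq (c : GrpI → ℝ) (d : GrpI → ((j : Fin N) → Xs j) → ℝ) (i : GrpI) :
    TP i d (Γ.muRE c) (Γ.fRE c) = ∑ x, d i x * Γ.p i x Cls.q := by
  have hnum : ∀ x : (j : Fin N) → Xs j,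
      d i x * Γ.muRE c i x * Γ.fRE c i x
        = Γ.lam i * Γ.G (c i) * (d i x * Γ.p i x Cls.q) := fun x => by
    rw [mul_assoc, muf]; ring
  have hden : ∀ x : (j : Fin N) → Xs j,
      Γ.muRE c i x * Γ.fRE c i x
        = Γ.lam i * Γ.G (c i) * Γ.p i x Cls.q := fun x => by
    rw [muf]; ring
  rw [TP, Finset.sum_congr rfl fun x _ => hnum x,
    Finset.sum_congr rfl fun x _ => hden x, ← Finset.mul_sum, ← Finset.mul_sum,
    sum_p, mul_one]
  exact mul_div_cancel_left₀ _ (mul_pos (lam_pos Γ i) (G_pos Γ (c i))).ne'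

/-- The pointwise firm payoff weight. -/
def W (c : GrpI → ℝ) (i : GrpI) (x : (j : Fin N) → Xs j) : ℝ :=
  Γ.lam i * (Γ.G (c i) * Γ.vq * Γ.p i x Cls.q
    - (1 - Γ.G (c i)) * Γ.vu * Γ.p i x Cls.u)

lemma uf_eq (c : GrpI → ℝ) (d : GrpI → ((j : Fin N) → Xs j) → ℝ) :
    Γ.UF d (Γ.muRE c) (Γ.fRE c) = ∑ i, ∑ x, d i x * W Γ c i x := by
  rw [Game.UF]
  refine Finset.sum_congr rfl fun i _ => Finset.sum_congr rfl fun x _ => ?_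
  have h : d i x * Γ.muRE c i x *
        (Γ.fRE c i x * Γ.vq - (1 - Γ.fRE c i x) * Γ.vu)
      = d i x * ((Γ.muRE c i x * Γ.fRE c i x) * Γ.vq
          - (Γ.muRE c i x * (1 - Γ.fRE c i x)) * Γ.vu) := by ring
  rw [h, muf, mu_one_sub_f, W]
  ring

/-- The firm's marginal benefit per unit likelihood. -/
def hfun (G0 t : ℝ) : ℝ := G0 * Γ.vq - (1 - G0) * Γ.vu / t

lemma W_eq (c : GrpI → ℝ) (i : GrpI) (x : (j : Fin N) → Xs j) :
    W Γ c i x = Γ.lam i * Γ.p i x Cls.q * hfun Γ (Γ.G (c i)) (Γ.lhd x) := by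
  rw [W, hfun, u_eq Γ i x]
  ring

lemma hfun_mono {G0 : ℝ} (hG : G0 < 1) {t t' : ℝ} (ht : 0 < t) (htt : t < t') :
    hfun Γ G0 t < hfun Γ G0 t' := by
  rw [hfun, hfun]
  have h1 : (1 - G0) * Γ.vu / t' < (1 - G0) * Γ.vu / t :=
    div_lt_div_of_pos_left (mul_pos (by linarith) Γ.vu_pos) ht htt
  linarith

/-- The finite set of likelihood values. -/
def Lset : Finset ℝ := Finset.univ.image Γ.lhd

/-- q-mass of the decision at a given likelihood level, per group. -/
def nu (d : GrpI → ((j : Fin N) → Xs j) → ℝ) (i : GrpI) (lv : ℝ) : ℝ :=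
  ∑ x ∈ Finset.univ.filter (fun x => Γ.lhd x = lv), d i x * Γ.p i x Cls.q

/-- Total q-mass at a likelihood level (group independent). -/
def mass (lv : ℝ) : ℝ :=
  ∑ xY ∈ Finset.univ.filter (fun xY => Γ.lhdY xY = lv), Γ.pY xY Cls.q

lemma lv_pos {lv : ℝ} (hlv : lv ∈ Lset Γ) : 0 < lv := by
  obtain ⟨x, _, rfl⟩ := Finset.mem_image.1 hlv
  exact lhd_pos Γ x

lemma sum_levels (ψ : ℝ → ℝ) (e : ((j : Fin N) → Xs j) → ℝ) :
    ∑ x, ψ (Γ.lhd x) * e x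
      = ∑ lv ∈ Lset Γ, ψ lv *
          ∑ x ∈ Finset.univ.filter (fun x => Γ.lhd x = lv), e x := by
  rw [← Finset.sum_fiberwise_of_maps_to (g := Γ.lhd) (t := Lset Γ)
    (fun x _ => Finset.mem_image_of_mem _ (Finset.mem_univ x))
    (fun x => ψ (Γ.lhd x) * e x)]
  refine Finset.sum_congr rfl fun lv _ => ?_
  rw [Finset.mul_sum]
  refine Finset.sum_congr rfl fun x hx => ?_
  rw [(Finset.mem_filter.1 hx).2]

lemma mass_eq (i : GrpI) (lv : ℝ) :
    ∑ x ∈ Finset.univ.filter (fun x => Γ.lhd x = lv), Γ.p i x Cls.q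
      = mass Γ lv := by
  have h := sum_phi Γ i (fun t => if t = lv then 1 else 0)
  rw [mass, Finset.sum_filter, Finset.sum_filter]
  simpa [ite_mul, one_mul, zero_mul] using h

lemma nu_nonneg {d : GrpI → ((j : Fin N) → Xs j) → ℝ} (hd : IsPolicy d)
    (i : GrpI) (lv : ℝ) : 0 ≤ nu Γ d i lv :=
  Finset.sum_nonneg fun x _ =>
    mul_nonneg (hd i x).1 (p_pos Γ i x Cls.q).le

lemma nu_le_mass {d : GrpI → ((j : Fin N) → Xs j) → ℝ} (hd : IsPolicy d)
    (i : GrpI) (lv : ℝ) : nu Γ d i lv ≤ mass Γ lv := by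
  rw [← mass_eq Γ i lv]
  exact Finset.sum_le_sum fun x _ => by
    nlinarith [(hd i x).1, (hd i x).2, p_pos Γ i x Cls.q]

lemma nu_total (d : GrpI → ((j : Fin N) → Xs j) → ℝ) (i : GrpI) :
    ∑ lv ∈ Lset Γ, nu Γ d i lv = ∑ x, d i x * Γ.p i x Cls.q :=
  Finset.sum_fiberwise_of_maps_to
    (fun x _ => Finset.mem_image_of_mem _ (Finset.mem_univ x)) _

lemma sum_levels_nu (d : GrpI → ((j : Fin N) → Xs j) → ℝ) (ψ : ℝ → ℝ) (i : GrpI) :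
    ∑ x, ψ (Γ.lhd x) * (d i x * Γ.p i x Cls.q)
      = ∑ lv ∈ Lset Γ, ψ lv * nu Γ d i lv :=
  sum_levels Γ ψ _

end EOproof
namespace EOproof
open EOproof2 Set
variable {N : ℕ} {Xs : Fin N → Type} [∀ j, Fintype (Xs j)] [∀ j, Nonempty (Xs j)]
variable (Γ : Game N Xs)

lemma threshold (c : GrpI → ℝ) {d : GrpI → ((j : Fin N) → Xs j) → ℝ}
    (hd : IsPolicy d)
    (hmem : TP GrpI.w d (Γ.muRE c) (Γ.fRE c) = TP GrpI.b d (Γ.muRE c) (Γ.fRE c))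
    (hopt : ∀ d' ∈ EOset (Γ.muRE c) (Γ.fRE c),
      Γ.UF d' (Γ.muRE c) (Γ.fRE c) ≤ Γ.UF d (Γ.muRE c) (Γ.fRE c))
    (i : GrpI) {lv lv' : ℝ} (hlv : lv ∈ Lset Γ) (_hlv' : lv' ∈ Lset Γ)
    (hlt : lv < lv') (h1 : 0 < nu Γ d i lv) (h2 : nu Γ d i lv' < mass Γ lv') :
    False := by
  classical
  have hne : lv ≠ lv' := ne_of_lt hlt
  set ε := min (nu Γ d i lv) (mass Γ lv' - nu Γ d i lv') with hεdef
  have hε : 0 < ε := lt_min h1 (by linarith)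
  set θ := ε / nu Γ d i lv with hθdef
  set η := ε / (mass Γ lv' - nu Γ d i lv') with hηdef
  have hθ : 0 < θ := div_pos hε h1
  have hθ1 : θ ≤ 1 := (div_le_one h1).2 (min_le_left _ _)
  have hη : 0 < η := div_pos hε (by linarith)
  have hη1 : η ≤ 1 := (div_le_one (by linarith)).2 (min_le_right _ _)
  have hθν : θ * nu Γ d i lv = ε := div_mul_cancel₀ ε h1.ne'
  have hην : η * (mass Γ lv' - nu Γ d i lv') = ε :=
    div_mul_cancel₀ ε (by linarith : (0:ℝ) < _).ne'
  set d' : GrpI → ((j : Fin N) → Xs j) → ℝ := fun j x =>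
    if j = i ∧ Γ.lhd x = lv then (1 - θ) * d j x
    else if j = i ∧ Γ.lhd x = lv' then d j x + η * (1 - d j x)
    else d j x with hd'def
  -- pointwise descriptions
  have hother : ∀ j, j ≠ i → ∀ x, d' j x = d j x := by
    intro j hj x; simp [hd'def, hj]
  have hfib1 : ∀ x, Γ.lhd x = lv → d' i x = (1 - θ) * d i x := by
    intro x hx; simp [hd'def, hx]
  have hfib2 : ∀ x, Γ.lhd x = lv' → d' i x = d i x + η * (1 - d i x) := by
    intro x hx; simp [hd'def, hx, hne.symm]
  have hfib0 : ∀ x, Γ.lhd x ≠ lv → Γ.lhd x ≠ lv' → d' i x = d i x := by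
    intro x hx hx'; simp [hd'def, hx, hx']
  -- d' is a policy
  have hd' : IsPolicy d' := by
    intro j x
    rcases eq_or_ne j i with rfl | hj
    · by_cases hx : Γ.lhd x = lv
      · rw [hfib1 x hx]
        obtain ⟨ha, hb⟩ := hd j x
        constructor
        · nlinarith
        · nlinarith
      · by_cases hx' : Γ.lhd x = lv'
        · rw [hfib2 x hx']
          obtain ⟨ha, hb⟩ := hd j x
          constructor
          · nlinarith
          · nlinarith
        · rw [hfib0 x hx hx']; exact hd j x
    · rw [hother j hj]; exact hd j x
  -- splitting sums over the two affected fibers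
  have split : ∀ F : ((j : Fin N) → Xs j) → ℝ,
      (∀ x, Γ.lhd x ≠ lv → Γ.lhd x ≠ lv' → F x = 0) →
      ∑ x, F x
        = (∑ x ∈ Finset.univ.filter (fun x => Γ.lhd x = lv), F x)
          + ∑ x ∈ Finset.univ.filter (fun x => Γ.lhd x = lv'), F x := by
    intro F hF
    rw [← Finset.sum_filter_add_sum_filter_not Finset.univ
      (fun x => Γ.lhd x = lv) F]
    congr 1
    rw [← Finset.sum_filter_add_sum_filter_not
      (Finset.univ.filter (fun x => ¬ Γ.lhd x = lv)) (fun x => Γ.lhd x = lv') F]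
    have e1 : (Finset.univ.filter (fun x => ¬ Γ.lhd x = lv)).filter
        (fun x => Γ.lhd x = lv')
        = Finset.univ.filter (fun x => Γ.lhd x = lv') := by
      ext x
      simp only [Finset.mem_filter, Finset.mem_univ, true_and]
      constructor
      · rintro ⟨_, h⟩; exact h
      · intro h; exact ⟨by rw [h]; exact hne.symm, h⟩
    have e2 : ∑ x ∈ (Finset.univ.filter (fun x => ¬ Γ.lhd x = lv)).filter
        (fun x => ¬ Γ.lhd x = lv'), F x = 0 := by
      refine Finset.sum_eq_zero fun x hx => ?_
      simp only [Finset.mem_filter, Finset.mem_univ, true_and] at hx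
      exact hF x hx.1 hx.2
    rw [e1, e2, add_zero]
  -- q-mass preservation for each group
  have hD : ∀ j, ∑ x, d' j x * Γ.p j x Cls.q = ∑ x, d j x * Γ.p j x Cls.q := by
    intro j
    rcases eq_or_ne j i with rfl | hj
    swap
    · exact Finset.sum_congr rfl fun x _ => by rw [hother j hj]
    have key : ∑ x, (d' j x - d j x) * Γ.p j x Cls.q = 0 := by
      rw [split _ (fun x hx hx' => by rw [hfib0 x hx hx']; ring)]
      have s1 : ∑ x ∈ Finset.univ.filter (fun x => Γ.lhd x = lv),
          (d' j x - d j x) * Γ.p j x Cls.q = -(θ * nu Γ d j lv) := by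
        rw [nu, Finset.mul_sum, ← Finset.sum_neg_distrib]
        refine Finset.sum_congr rfl fun x hx => ?_
        rw [hfib1 x (Finset.mem_filter.1 hx).2]; ring
      have s2 : ∑ x ∈ Finset.univ.filter (fun x => Γ.lhd x = lv'),
          (d' j x - d j x) * Γ.p j x Cls.q
            = η * (mass Γ lv' - nu Γ d j lv') := by
        have : ∀ x ∈ Finset.univ.filter (fun x => Γ.lhd x = lv'),
            (d' j x - d j x) * Γ.p j x Cls.q
              = η * (Γ.p j x Cls.q - d j x * Γ.p j x Cls.q) := by
          intro x hx
          rw [hfib2 x (Finset.mem_filter.1 hx).2]; ring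
        rw [Finset.sum_congr rfl this, ← Finset.mul_sum,
          Finset.sum_sub_distrib, mass_eq Γ j lv']
        rfl
      rw [s1, s2, hθν, hην]; ring
    have expand : ∑ x, (d' j x - d j x) * Γ.p j x Cls.q
        = (∑ x, d' j x * Γ.p j x Cls.q) - ∑ x, d j x * Γ.p j x Cls.q := by
      rw [← Finset.sum_sub_distrib]
      exact Finset.sum_congr rfl fun x _ => by ring
    rw [expand] at key
    linarith
  -- d' is in the EO control set
  have hEO : d' ∈ EOset (Γ.muRE c) (Γ.fRE c) := by
    refine ⟨hd', ?_⟩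
    rw [tp_eq, tp_eq, hD GrpI.w, hD GrpI.b, ← tp_eq Γ c, ← tp_eq Γ c]
    exact hmem
  -- strict improvement of firm utility
  have hUF : Γ.UF d (Γ.muRE c) (Γ.fRE c) < Γ.UF d' (Γ.muRE c) (Γ.fRE c) := by
    rw [uf_eq, uf_eq]
    have key : ∑ j, ∑ x, d' j x * W Γ c j x - ∑ j, ∑ x, d j x * W Γ c j x
        = Γ.lam i * (ε * (hfun Γ (Γ.G (c i)) lv' - hfun Γ (Γ.G (c i)) lv)) := by
      rw [← Finset.sum_sub_distrib]
      have hterm : ∀ j, (∑ x, d' j x * W Γ c j x) - ∑ x, d j x * W Γ c j x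
          = if j = i then
              Γ.lam i * (ε * (hfun Γ (Γ.G (c i)) lv' - hfun Γ (Γ.G (c i)) lv))
            else 0 := by
        intro j
        rcases eq_or_ne j i with rfl | hj
        swap
        · rw [if_neg hj, sub_eq_zero]
          exact Finset.sum_congr rfl fun x _ => by rw [hother j hj]
        rw [if_pos rfl]
        have expand : (∑ x, d' j x * W Γ c j x) - ∑ x, d j x * W Γ c j x
            = ∑ x, (d' j x - d j x) * W Γ c j x := by
          rw [← Finset.sum_sub_distrib]
          exact Finset.sum_congr rfl fun x _ => by ring
        rw [expand, split _ (fun x hx hx' => by rw [hfib0 x hx hx']; ring)]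
        have s1 : ∑ x ∈ Finset.univ.filter (fun x => Γ.lhd x = lv),
            (d' j x - d j x) * W Γ c j x
              = -(Γ.lam j * hfun Γ (Γ.G (c j)) lv * (θ * nu Γ d j lv)) := by
          rw [nu, Finset.mul_sum, Finset.mul_sum, ← Finset.sum_neg_distrib]
          refine Finset.sum_congr rfl fun x hx => ?_
          have hx2 := (Finset.mem_filter.1 hx).2
          rw [hfib1 x hx2, W_eq, hx2]; ring
        have s2 : ∑ x ∈ Finset.univ.filter (fun x => Γ.lhd x = lv'),
            (d' j x - d j x) * W Γ c j x
              = Γ.lam j * hfun Γ (Γ.G (c j)) lv'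
                  * (η * (mass Γ lv' - nu Γ d j lv')) := by
          have e : ∀ x ∈ Finset.univ.filter (fun x => Γ.lhd x = lv'),
              (d' j x - d j x) * W Γ c j x
                = Γ.lam j * hfun Γ (Γ.G (c j)) lv'
                    * (η * (Γ.p j x Cls.q - d j x * Γ.p j x Cls.q)) := by
            intro x hx
            have hx2 := (Finset.mem_filter.1 hx).2
            rw [hfib2 x hx2, W_eq, hx2]; ring
          rw [Finset.sum_congr rfl e, ← Finset.mul_sum, ← Finset.mul_sum,
            Finset.sum_sub_distrib, mass_eq Γ j lv']
          rfl
        rw [s1, s2, hθν, hην]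
        ring
      rw [Finset.sum_congr rfl fun j _ => hterm j, Finset.sum_ite_eq']
      simp
    have hpos : 0 < Γ.lam i * (ε * (hfun Γ (Γ.G (c i)) lv' - hfun Γ (Γ.G (c i)) lv)) := by
      have hmono := hfun_mono Γ (G_lt_one Γ (c i)) (lv_pos Γ hlv) hlt
      exact mul_pos (lam_pos Γ i) (mul_pos hε (sub_pos.2 hmono))
    linarith
  exact absurd (hopt d' hEO) (not_le.2 hUF)

end EOproof
namespace EOproof
open EOproof2 Set
variable {N : ℕ} {Xs : Fin N → Type} [∀ j, Fintype (Xs j)] [∀ j, Nonempty (Xs j)]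
variable (Γ : Game N Xs)

lemma nu_eq (c : GrpI → ℝ) {d : GrpI → ((j : Fin N) → Xs j) → ℝ}
    (hd : IsPolicy d)
    (hmem : TP GrpI.w d (Γ.muRE c) (Γ.fRE c) = TP GrpI.b d (Γ.muRE c) (Γ.fRE c))
    (hopt : ∀ d' ∈ EOset (Γ.muRE c) (Γ.fRE c),
      Γ.UF d' (Γ.muRE c) (Γ.fRE c) ≤ Γ.UF d (Γ.muRE c) (Γ.fRE c)) :
    ∀ lv ∈ Lset Γ, nu Γ d GrpI.w lv = nu Γ d GrpI.b lv := by
  classical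
  by_contra hcon
  push_neg at hcon
  obtain ⟨lv1, hlv1, hne1⟩ := hcon
  set Dset := (Lset Γ).filter
    (fun lv => nu Γ d GrpI.w lv ≠ nu Γ d GrpI.b lv) with hDdef
  have hDne : Dset.Nonempty := ⟨lv1, Finset.mem_filter.2 ⟨hlv1, hne1⟩⟩
  set lv0 := Dset.max' hDne with hlv0def
  have hlv0D : lv0 ∈ Dset := Dset.max'_mem hDne
  have hlv0L : lv0 ∈ Lset Γ := (Finset.mem_filter.1 hlv0D).1
  have hlv0ne : nu Γ d GrpI.w lv0 ≠ nu Γ d GrpI.b lv0 :=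
    (Finset.mem_filter.1 hlv0D).2
  have habove : ∀ lv ∈ Lset Γ, lv0 < lv →
      nu Γ d GrpI.w lv = nu Γ d GrpI.b lv := by
    intro lv hlv hgt
    by_contra hne2
    exact absurd (Dset.le_max' lv (Finset.mem_filter.2 ⟨hlv, hne2⟩))
      (not_le.2 hgt)
  have htot : ∑ lv ∈ Lset Γ, nu Γ d GrpI.w lv
      = ∑ lv ∈ Lset Γ, nu Γ d GrpI.b lv := by
    rw [nu_total, nu_total]
    have h1 := tp_eq Γ c d GrpI.w
    have h2 := tp_eq Γ c d GrpI.b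
    rw [← h1, ← h2]; exact hmem
  have hsplit : ∀ i, ∑ lv ∈ Lset Γ, nu Γ d i lv
      = (∑ lv ∈ (Lset Γ).filter (fun lv => lv < lv0), nu Γ d i lv)
        + (nu Γ d i lv0
          + ∑ lv ∈ (Lset Γ).filter (fun lv => lv0 < lv), nu Γ d i lv) := by
    intro i
    rw [← Finset.sum_filter_add_sum_filter_not (Lset Γ) (fun lv => lv < lv0)]
    congr 1
    have heq : (Lset Γ).filter (fun lv => ¬ lv < lv0)
        = insert lv0 ((Lset Γ).filter (fun lv => lv0 < lv)) := by
      ext lv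
      simp only [Finset.mem_filter, Finset.mem_insert, not_lt]
      constructor
      · rintro ⟨hl, hge⟩
        rcases eq_or_lt_of_le hge with h | h
        · exact Or.inl h.symm
        · exact Or.inr ⟨hl, h⟩
      · rintro (rfl | ⟨hl, hgt⟩)
        · exact ⟨hlv0L, le_rfl⟩
        · exact ⟨hl, hgt.le⟩
    rw [heq, Finset.sum_insert (by simp)]
  have hgt_eq : ∑ lv ∈ (Lset Γ).filter (fun lv => lv0 < lv), nu Γ d GrpI.w lv
      = ∑ lv ∈ (Lset Γ).filter (fun lv => lv0 < lv), nu Γ d GrpI.b lv := by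
    refine Finset.sum_congr rfl fun lv hlv => ?_
    have h := Finset.mem_filter.1 hlv
    exact habove lv h.1 h.2
  have hkey : (∑ lv ∈ (Lset Γ).filter (fun lv => lv < lv0), nu Γ d GrpI.w lv)
        + nu Γ d GrpI.w lv0
      = (∑ lv ∈ (Lset Γ).filter (fun lv => lv < lv0), nu Γ d GrpI.b lv)
        + nu Γ d GrpI.b lv0 := by
    have h1 := hsplit GrpI.w
    have h2 := hsplit GrpI.b
    rw [h1, h2, hgt_eq] at htot
    linarith
  have main : ∀ i i' : GrpI, nu Γ d i' lv0 < nu Γ d i lv0 →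
      (∑ lv ∈ (Lset Γ).filter (fun lv => lv < lv0), nu Γ d i lv)
          + nu Γ d i lv0
        = (∑ lv ∈ (Lset Γ).filter (fun lv => lv < lv0), nu Γ d i' lv)
          + nu Γ d i' lv0 → False := by
    intro i i' hlt0 hsum
    have hex : ∃ lv'' ∈ (Lset Γ).filter (fun lv => lv < lv0),
        nu Γ d i lv'' < nu Γ d i' lv'' := by
      by_contra hno
      push_neg at hno
      have hle := Finset.sum_le_sum hno
      linarith
    obtain ⟨lv'', hlv''f, hlt''⟩ := hex
    have hmf := Finset.mem_filter.1 hlv''f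
    exact threshold Γ c hd hmem hopt i' hmf.1 hlv0L hmf.2
      (lt_of_le_of_lt (nu_nonneg Γ hd i lv'') hlt'')
      (lt_of_lt_of_le hlt0 (nu_le_mass Γ hd i lv0))
  rcases lt_or_gt_of_ne hlv0ne with h | h
  · exact main GrpI.b GrpI.w h hkey.symm
  · exact main GrpI.w GrpI.b h hkey

lemma c_eq (c : GrpI → ℝ) {d : GrpI → ((j : Fin N) → Xs j) → ℝ}
    (hd : IsPolicy d) (hbr : Γ.BestResponds c d)
    (hmem : TP GrpI.w d (Γ.muRE c) (Γ.fRE c) = TP GrpI.b d (Γ.muRE c) (Γ.fRE c))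
    (hopt : ∀ d' ∈ EOset (Γ.muRE c) (Γ.fRE c),
      Γ.UF d' (Γ.muRE c) (Γ.fRE c) ≤ Γ.UF d (Γ.muRE c) (Γ.fRE c)) :
    c GrpI.w = c GrpI.b := by
  have hν := nu_eq Γ c hd hmem hopt
  have hB : ∀ i, ∑ x, (Γ.p i x Cls.q - Γ.p i x Cls.u) * d i x
      = ∑ lv ∈ Lset Γ, (1 - 1/lv) * nu Γ d i lv := by
    intro i
    rw [← sum_levels_nu Γ d (fun t => 1 - 1/t) i]
    refine Finset.sum_congr rfl fun x _ => ?_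
    rw [u_eq Γ i x]
    field_simp [(lhd_pos Γ x).ne']
  rw [bestResponds_eq Γ hbr GrpI.w, bestResponds_eq Γ hbr GrpI.b, hB, hB]
  congr 1
  exact Finset.sum_congr rfl fun lv hlv => by rw [hν lv hlv]

lemma global_opt (c : GrpI → ℝ) {d : GrpI → ((j : Fin N) → Xs j) → ℝ}
    (hcc : c GrpI.w = c GrpI.b)
    (hopt : ∀ d' ∈ EOset (Γ.muRE c) (Γ.fRE c),
      Γ.UF d' (Γ.muRE c) (Γ.fRE c) ≤ Γ.UF d (Γ.muRE c) (Γ.fRE c)) :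
    ∀ d', IsPolicy d' →
      Γ.UF d' (Γ.muRE c) (Γ.fRE c) ≤ Γ.UF d (Γ.muRE c) (Γ.fRE c) := by
  classical
  intro d' hd'
  set G0 := Γ.G (c GrpI.w) with hG0
  have hGi : ∀ i, Γ.G (c i) = G0 := by
    intro i; cases i
    · rfl
    · rw [hG0, hcc]
  set dp : GrpI → ((j : Fin N) → Xs j) → ℝ := fun _ x =>
    if 0 ≤ hfun Γ G0 (Γ.lhd x) then 1 else 0 with hdpdef
  have hdp : IsPolicy dp := by
    intro i x
    by_cases h : 0 ≤ hfun Γ G0 (Γ.lhd x) <;> simp [hdpdef, h]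
  have hsign : ∀ i x, d' i x * W Γ c i x ≤ dp i x * W Γ c i x := by
    intro i x
    rw [W_eq, hGi i]
    have hlp := mul_pos (lam_pos Γ i) (p_pos Γ i x Cls.q)
    by_cases h : 0 ≤ hfun Γ G0 (Γ.lhd x)
    · simp only [hdpdef, if_pos h, one_mul]
      have hc : 0 ≤ Γ.lam i * Γ.p i x Cls.q * hfun Γ G0 (Γ.lhd x) :=
        mul_nonneg hlp.le h
      nlinarith [(hd' i x).2]
    · simp only [hdpdef, if_neg h, zero_mul]
      push_neg at h
      have hc : Γ.lam i * Γ.p i x Cls.q * hfun Γ G0 (Γ.lhd x) ≤ 0 :=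
        (mul_nonpos_iff.2 (Or.inl ⟨hlp.le, h.le⟩))
      nlinarith [(hd' i x).1]
  have h1 : Γ.UF d' (Γ.muRE c) (Γ.fRE c) ≤ Γ.UF dp (Γ.muRE c) (Γ.fRE c) := by
    rw [uf_eq, uf_eq]
    exact Finset.sum_le_sum fun i _ => Finset.sum_le_sum fun x _ => hsign i x
  have hdpEO : dp ∈ EOset (Γ.muRE c) (Γ.fRE c) := by
    refine ⟨hdp, ?_⟩
    rw [tp_eq, tp_eq]
    have hform : ∀ i, ∑ x, dp i x * Γ.p i x Cls.q
        = ∑ xY, (if 0 ≤ hfun Γ G0 (Γ.lhdY xY) then (1:ℝ) else 0)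
            * Γ.pY xY Cls.q := by
      intro i
      rw [← sum_phi Γ i (fun t => if 0 ≤ hfun Γ G0 t then (1:ℝ) else 0)]
    rw [hform GrpI.w, hform GrpI.b]
  exact h1.trans (hopt dp hdpEO)

end EOproof
namespace EOproof
open EOproof2 Set
variable {N : ℕ} {Xs : Fin N → Type} [∀ j, Fintype (Xs j)] [∀ j, Nonempty (Xs j)]
variable (Γ : Game N Xs)

lemma pointwise_opt (c : GrpI → ℝ) {d : GrpI → ((j : Fin N) → Xs j) → ℝ}
    (hd : IsPolicy d)
    (hopt : ∀ d', IsPolicy d' →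
      Γ.UF d' (Γ.muRE c) (Γ.fRE c) ≤ Γ.UF d (Γ.muRE c) (Γ.fRE c))
    (i : GrpI) (x : (j : Fin N) → Xs j) :
    (0 < W Γ c i x → d i x = 1) ∧ (W Γ c i x < 0 → d i x = 0) := by
  classical
  have gen : ∀ v : ℝ, v ∈ Set.Icc (0:ℝ) 1 →
      (v - d i x) * W Γ c i x ≤ 0 := by
    intro v hv
    set d'' : GrpI → ((j : Fin N) → Xs j) → ℝ := fun j y =>
      if j = i ∧ y = x then v else d j y with hd''def
    have hd'' : IsPolicy d'' := by
      intro j y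
      by_cases h : j = i ∧ y = x
      · simpa [hd''def, h] using hv
      · simpa [hd''def, h] using hd j y
    have hUF := hopt d'' hd''
    rw [uf_eq, uf_eq] at hUF
    have hdiff : ∑ j, ∑ y, d'' j y * W Γ c j y - ∑ j, ∑ y, d j y * W Γ c j y
        = (v - d i x) * W Γ c i x := by
      rw [← Finset.sum_sub_distrib]
      have hterm : ∀ j, (∑ y, d'' j y * W Γ c j y) - (∑ y, d j y * W Γ c j y)
          = if j = i then (v - d i x) * W Γ c i x else 0 := by
        intro j
        rw [← Finset.sum_sub_distrib]
        rcases eq_or_ne j i with rfl | hj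
        · rw [if_pos rfl]
          rw [Fintype.sum_eq_single x (fun y hy => by
            simp [hd''def, hy])]
          simp [hd''def]
          ring
        · rw [if_neg hj]
          refine Finset.sum_eq_zero fun y _ => ?_
          simp [hd''def, hj]
      rw [Finset.sum_congr rfl fun j _ => hterm j, Finset.sum_ite_eq']
      simp
    linarith
  constructor
  · intro hw
    refine le_antisymm (hd i x).2 ?_
    by_contra hcon
    push_neg at hcon
    have h1 := gen 1 (by norm_num)
    nlinarith [mul_pos hw (sub_pos.2 hcon)]
  · intro hw
    refine le_antisymm ?_ (hd i x).1
    by_contra hcon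
    push_neg at hcon
    have h0 := gen 0 (by norm_num)
    nlinarith [mul_pos hcon (neg_pos.2 hw)]

lemma tp_of_eq (hone : Γ.OneNotLV) (c : GrpI → ℝ)
    {d : GrpI → ((j : Fin N) → Xs j) → ℝ} (hd : IsPolicy d)
    (hbr : Γ.BestResponds c d)
    (hopt : ∀ d', IsPolicy d' →
      Γ.UF d' (Γ.muRE c) (Γ.fRE c) ≤ Γ.UF d (Γ.muRE c) (Γ.fRE c))
    (hcc : c GrpI.w = c GrpI.b) :
    TP GrpI.w d (Γ.muRE c) (Γ.fRE c) = TP GrpI.b d (Γ.muRE c) (Γ.fRE c) := by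
  classical
  set G0 := Γ.G (c GrpI.w) with hG0
  have hGi : ∀ i, Γ.G (c i) = G0 := by
    intro i; cases i
    · rfl
    · rw [hG0, hcc]
  have hG0pos : 0 < G0 := G_pos Γ _
  have hG0lt : G0 < 1 := G_lt_one Γ _
  have hcls : ∀ i x, (0 < hfun Γ G0 (Γ.lhd x) → d i x = 1)
      ∧ (hfun Γ G0 (Γ.lhd x) < 0 → d i x = 0) := by
    intro i x
    have hpo := pointwise_opt Γ c hd hopt i x
    have hW : W Γ c i x
        = (Γ.lam i * Γ.p i x Cls.q) * hfun Γ G0 (Γ.lhd x) := by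
      rw [W_eq, hGi i]
    have hlp := mul_pos (lam_pos Γ i) (p_pos Γ i x Cls.q)
    constructor
    · intro h; exact hpo.1 (by rw [hW]; exact mul_pos hlp h)
    · intro h; exact hpo.2 (by rw [hW]; exact mul_neg_of_pos_of_neg hlp h)
  set lstar := (1 - G0) * Γ.vu / (G0 * Γ.vq) with hls
  have hlstar_pos : 0 < lstar :=
    div_pos (mul_pos (by linarith) Γ.vu_pos) (mul_pos hG0pos Γ.vq_pos)
  have hzero : ∀ t : ℝ, 0 < t → (hfun Γ G0 t = 0 ↔ t = lstar) := by
    intro t ht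
    rw [hfun, hls]
    constructor
    · intro h
      rw [sub_eq_zero] at h
      rw [eq_div_iff (mul_pos hG0pos Γ.vq_pos).ne']
      field_simp at h
      linarith
    · intro h
      rw [h, div_div_cancel₀ (mul_pos (by linarith : (0:ℝ) < 1 - G0)
        Γ.vu_pos).ne', sub_self]
  set Z : GrpI → ℝ := fun i =>
    ∑ x, (if hfun Γ G0 (Γ.lhd x) = 0 then d i x * Γ.p i x Cls.q else 0)
    with hZdef
  have hdec : ∀ i, ∑ x, d i x * Γ.p i x Cls.q
      = (∑ x, (if 0 < hfun Γ G0 (Γ.lhd x) then (1:ℝ) else 0) * Γ.p i x Cls.q)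
        + Z i := by
    intro i
    rw [hZdef, ← Finset.sum_add_distrib]
    refine Finset.sum_congr rfl fun x _ => ?_
    rcases lt_trichotomy (hfun Γ G0 (Γ.lhd x)) 0 with h | h | h
    · rw [if_neg (not_lt.2 h.le), if_neg h.ne, (hcls i x).2 h]; ring
    · rw [if_pos h, if_neg (by rw [h]; exact lt_irrefl 0)]; ring
    · rw [if_pos h, if_neg (ne_of_gt h), (hcls i x).1 h]; ring
  have hpos_ind :
      ∑ x, (if 0 < hfun Γ G0 (Γ.lhd x) then (1:ℝ) else 0) * Γ.p GrpI.w x Cls.q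
        = ∑ x, (if 0 < hfun Γ G0 (Γ.lhd x) then (1:ℝ) else 0)
            * Γ.p GrpI.b x Cls.q := by
    rw [sum_phi Γ GrpI.w (fun t => if 0 < hfun Γ G0 t then (1:ℝ) else 0),
      sum_phi Γ GrpI.b (fun t => if 0 < hfun Γ G0 t then (1:ℝ) else 0)]
  have hBeq : ∑ x, (Γ.p GrpI.w x Cls.q - Γ.p GrpI.w x Cls.u) * d GrpI.w x
      = ∑ x, (Γ.p GrpI.b x Cls.q - Γ.p GrpI.b x Cls.u) * d GrpI.b x := by
    have h1 := bestResponds_eq Γ hbr GrpI.w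
    have h2 := bestResponds_eq Γ hbr GrpI.b
    have h3 := hcc
    rw [h1, h2] at h3
    exact mul_left_cancel₀ Γ.om_pos.ne' h3
  have hBdec : ∀ i, ∑ x, (Γ.p i x Cls.q - Γ.p i x Cls.u) * d i x
      = (∑ x, (if 0 < hfun Γ G0 (Γ.lhd x) then (1 - 1/Γ.lhd x) else 0)
          * Γ.p i x Cls.q)
        + (1 - 1/lstar) * Z i := by
    intro i
    rw [hZdef, Finset.mul_sum, ← Finset.sum_add_distrib]
    refine Finset.sum_congr rfl fun x _ => ?_
    have hterm : (Γ.p i x Cls.q - Γ.p i x Cls.u) * d i x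
        = (1 - 1/Γ.lhd x) * (d i x * Γ.p i x Cls.q) := by
      rw [u_eq Γ i x]
      field_simp [(lhd_pos Γ x).ne']
    rcases lt_trichotomy (hfun Γ G0 (Γ.lhd x)) 0 with h | h | h
    · rw [hterm, if_neg (not_lt.2 h.le), if_neg h.ne, (hcls i x).2 h]; ring
    · have hlx : Γ.lhd x = lstar := (hzero _ (lhd_pos Γ x)).1 h
      rw [hterm, if_neg (show ¬ 0 < hfun Γ G0 (Γ.lhd x) from by
        rw [h]; exact lt_irrefl 0), if_pos h, hlx]
      ring
    · rw [hterm, if_pos h, if_neg (ne_of_gt h), (hcls i x).1 h]; ring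
  have hphi_ind :
      ∑ x, (if 0 < hfun Γ G0 (Γ.lhd x) then (1 - 1/Γ.lhd x) else 0)
          * Γ.p GrpI.w x Cls.q
        = ∑ x, (if 0 < hfun Γ G0 (Γ.lhd x) then (1 - 1/Γ.lhd x) else 0)
            * Γ.p GrpI.b x Cls.q := by
    have hw := sum_phi Γ GrpI.w (fun t => if 0 < hfun Γ G0 t then (1 - 1/t) else 0)
    have hb := sum_phi Γ GrpI.b (fun t => if 0 < hfun Γ G0 t then (1 - 1/t) else 0)
    exact hw.trans hb.symm
  have hZeq : Z GrpI.w = Z GrpI.b := by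
    by_cases hl1 : lstar = 1
    · have hZ0 : ∀ i, Z i = 0 := by
        intro i
        rw [hZdef]
        refine Finset.sum_eq_zero fun x _ => ?_
        rw [if_neg]
        intro h
        exact hone ⟨x, ((hzero _ (lhd_pos Γ x)).1 h).trans hl1⟩
      rw [hZ0, hZ0]
    · have hne : (1 : ℝ) - 1/lstar ≠ 0 := by
        intro h
        apply hl1
        field_simp at h
        linarith
      have h1 := hBdec GrpI.w
      have h2 := hBdec GrpI.b
      rw [h1, h2, hphi_ind] at hBeq
      have := add_left_cancel hBeq
      exact mul_left_cancel₀ hne this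
  rw [tp_eq, tp_eq, hdec GrpI.w, hdec GrpI.b, hpos_ind, hZeq]

end EOproof
/-- **Theorem 1 (property 2).** The set of equal opportunity-controlled
equilibria coincides with the set of non-discriminatory equilibria. -/
theorem equal_opportunity_steady_states
    {N : ℕ} {Xs : Fin N → Type} [∀ j, Fintype (Xs j)] [∀ j, Nonempty (Xs j)]
    (Γ : Game N Xs) (hone : Γ.OneNotLV)
    (c : GrpI → ℝ) (d : GrpI → ((j : Fin N) → Xs j) → ℝ) :
    Γ.IsControlledEq (fun μ f => EOset μ f) c d ↔
      Γ.IsEquilibrium c d ∧ c GrpI.w = c GrpI.b := by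
  constructor
  · rintro ⟨⟨hd, hTP⟩, hbr, hopt⟩
    have hcc := EOproof.c_eq Γ c hd hbr hTP hopt
    exact ⟨⟨hd, hbr, EOproof.global_opt Γ c hcc hopt⟩, hcc⟩
  · rintro ⟨⟨hd, hbr, hopt⟩, hcc⟩
    have hTP := EOproof.tp_of_eq Γ hone c hd hbr hopt hcc
    exact ⟨⟨hd, hTP⟩, hbr, fun d' hd' => hopt d' hd'.1⟩
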